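/- Let α > 2 be real, let 0 < τ < 1, and let N be a positive integer. Then 1 + 2·∫_{1}^{∞} x · (1 − (1 + τ·x^{−α})^{−N}) dx = ∑_{k=0}^{∞} [ (N)_k · (−2/α)_k / ( (1 − 2/α)_k · k! ) ] · (−τ)^k, where (a)_k = a(a+1)⋯(a+k−1) denotes the rising (Pochhammer) factorial; in particular the series on the right converges. -/

import Mathlib

open MeasureTheory Set

/-- For real `α > 2`, `0 < τ < 1` and a positive integer `N`, the
interference functional `1 + 2 ∫_{1}^{∞} x (1 − (1 + τ x^{−α})^{−N}) dx` equals the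
Gaussian hypergeometric series `∑_{k≥0} (N)_k (−2/α)_k (−τ)^k / ((1 − 2/α)_k k!)`
(in particular that series converges). -/
theorem interference_integral_eq_hypergeom_series
    (α τ : ℝ) (hα : 2 < α) (hτ0 : 0 < τ) (hτ1 : τ < 1) (N : ℕ) (hN : 0 < N) :
    Summable (fun k : ℕ =>
      (ascPochhammer ℝ k).eval (N : ℝ) * (ascPochhammer ℝ k).eval (-2 / α) /
        ((ascPochhammer ℝ k).eval (1 - 2 / α) * (Nat.factorial k)) * (-τ) ^ k) ∧
    1 + 2 * (∫ x in Ioi (1 : ℝ), x * (1 - ((1 + τ * x ^ (-α)) ^ N)⁻¹)) =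
      ∑' k : ℕ,
        (ascPochhammer ℝ k).eval (N : ℝ) * (ascPochhammer ℝ k).eval (-2 / α) /
          ((ascPochhammer ℝ k).eval (1 - 2 / α) * (Nat.factorial k)) * (-τ) ^ k := by
  obtain ⟨M, rfl⟩ : ∃ M, N = M + 1 := ⟨N - 1, by omega⟩
  have hα0 : (0:ℝ) < α := by linarith
  have hα2 : (0:ℝ) < α - 2 := by linarith
  set b : ℝ := -2 / α with hb
  have hb0 : b < 0 := div_neg_of_neg_of_pos (by norm_num) hα0
  have hb1 : 0 < 1 + b := by
    have h2α : 2 / α < 1 := (div_lt_one hα0).2 (by linarith)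
    have hbe : b = -(2/α) := by rw [hb]; ring
    rw [hbe]; linarith
  have h1b : (1 : ℝ) - 2 / α = 1 + b := by rw [hb]; ring
  -- the binomial coefficients
  set c : ℕ → ℝ := fun k => ((k + M).choose M : ℝ) with hc
  have hc_pos : ∀ k, 0 < c k := fun k => by
    have := Nat.choose_pos (Nat.le_add_left M k)
    simp only [hc]; exact_mod_cast this
  have hpochN : ∀ k : ℕ, (ascPochhammer ℝ k).eval ((M + 1 : ℕ) : ℝ)
      = (k.factorial : ℝ) * c k := by
    intro k
    have h : (ascPochhammer ℕ k).eval (M+1) = k.factorial * ((k + M).choose M) := by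
      rw [ascPochhammer_nat_eq_ascFactorial, Nat.ascFactorial_eq_factorial_mul_choose]
      congr 1
      rw [Nat.add_comm M k, Nat.choose_symm_add]
    have h2 := congrArg (Nat.cast : ℕ → ℝ) h
    push_cast at h2 ⊢
    simpa [hc] using h2
  have hbk : ∀ k : ℕ, b + (k:ℝ) ≠ 0 := by
    intro k
    cases k with
    | zero => simpa using hb0.ne
    | succ n =>
      have : (0:ℝ) < b + (n+1 : ℕ) := by push_cast; linarith [Nat.cast_nonneg (α := ℝ) n]
      exact this.ne'
  have hP1 : ∀ k : ℕ, 0 < (ascPochhammer ℝ k).eval (1 + b) :=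
    fun k => ascPochhammer_pos k _ hb1
  -- key pochhammer ratio identity
  have hterm : ∀ k : ℕ,
      (ascPochhammer ℝ k).eval ((M + 1 : ℕ) : ℝ) * (ascPochhammer ℝ k).eval b /
        ((ascPochhammer ℝ k).eval (1 - 2 / α) * (Nat.factorial k)) * (-τ) ^ k
      = c k * (b / (b + k)) * (-τ) ^ k := by
    intro k
    have e : (ascPochhammer ℝ k).eval b * (b + k) = b * (ascPochhammer ℝ k).eval (b + 1) := by
      have h1 : (ascPochhammer ℝ (k+1)).eval b = (ascPochhammer ℝ k).eval b * (b + k) := by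
        rw [ascPochhammer_succ_right]; simp
      have h2 : (ascPochhammer ℝ (k+1)).eval b = b * (ascPochhammer ℝ k).eval (b + 1) := by
        rw [ascPochhammer_succ_left]; simp [Polynomial.eval_comp]
      rw [← h1, h2]
    rw [add_comm b 1] at e
    rw [h1b, hpochN k]
    have hP1k : (ascPochhammer ℝ k).eval (1 + b) ≠ 0 := (hP1 k).ne'
    have hfk : (k.factorial : ℝ) ≠ 0 := by positivity
    have hbkk := hbk k
    field_simp
    linear_combination (c k * (-τ) ^ k) * e
  have hτn : ‖τ‖ < 1 := by rw [Real.norm_eq_abs, abs_of_pos hτ0]; exact hτ1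
  have S0 : Summable (fun k : ℕ => c k * τ ^ k) := by
    simpa [hc] using summable_choose_mul_geometric_of_norm_lt_one (R := ℝ) M hτn
  set Mb : ℝ := max 1 ((-b) / (1 + b)) with hMb
  have habs : ∀ k : ℕ, |b / (b + (k:ℝ))| ≤ Mb := by
    intro k
    cases k with
    | zero =>
      simp only [Nat.cast_zero, add_zero, div_self hb0.ne, abs_one]
      exact le_max_left _ _
    | succ n =>
      have hn0 : (0:ℝ) ≤ (n:ℝ) := Nat.cast_nonneg n
      have hd : 0 < b + ((n+1 : ℕ) : ℝ) := by push_cast; linarith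
      rw [abs_div, abs_of_neg hb0, abs_of_pos hd]
      refine le_trans ?_ (le_max_right _ _)
      have hnum : (0:ℝ) ≤ -b := by linarith
      have hle : 1 + b ≤ b + ((n+1 : ℕ) : ℝ) := by push_cast; linarith
      exact div_le_div_of_nonneg_left hnum hb1 hle
  have hsummable : Summable (fun k : ℕ =>
      (ascPochhammer ℝ k).eval ((M + 1 : ℕ) : ℝ) * (ascPochhammer ℝ k).eval b /
        ((ascPochhammer ℝ k).eval (1 - 2 / α) * (Nat.factorial k)) * (-τ) ^ k) := by
    simp only [hterm]
    apply Summable.of_abs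
    apply Summable.of_nonneg_of_le (fun k => abs_nonneg _) _ (S0.mul_left Mb)
    intro k
    have h1 : |c k * (b / (b + (k:ℝ))) * (-τ) ^ k| = c k * |b / (b + (k:ℝ))| * τ ^ k := by
      rw [abs_mul, abs_mul, abs_pow, abs_neg, abs_of_pos hτ0, abs_of_pos (hc_pos k)]
    rw [h1]
    calc c k * |b / (b + (k:ℝ))| * τ ^ k ≤ c k * Mb * τ ^ k := by
          have hck := (hc_pos k).le
          have hτk : (0:ℝ) ≤ τ ^ k := by positivity
          exact mul_le_mul_of_nonneg_right (mul_le_mul_of_nonneg_left (habs k) hck) hτk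
      _ = Mb * (c k * τ ^ k) := by ring
  -- the term functions
  set F : ℕ → ℝ → ℝ := fun k x => (-(c (k+1) * (-τ) ^ (k+1))) * x ^ ((1:ℝ) - α*((k:ℝ)+1)) with hF
  have hs : ∀ k : ℕ, ((1:ℝ) - α*((k:ℝ)+1)) < -1 := by
    intro k
    have h := mul_nonneg hα0.le (Nat.cast_nonneg (α := ℝ) k)
    nlinarith
  have hdk : ∀ k : ℕ, (0:ℝ) < α*((k:ℝ)+1) - 2 := by
    intro k
    have h := mul_nonneg hα0.le (Nat.cast_nonneg (α := ℝ) k)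
    nlinarith
  have hFint : ∀ k, IntegrableOn (F k) (Ioi (1:ℝ)) := fun k =>
    (integrableOn_Ioi_rpow_of_lt (hs k) one_pos).const_mul _
  have hrpowint : ∀ k : ℕ, ∫ x in Ioi (1:ℝ), x ^ ((1:ℝ) - α*((k:ℝ)+1)) = 1 / (α*((k:ℝ)+1) - 2) := by
    intro k
    rw [integral_Ioi_rpow_of_lt (hs k) one_pos, Real.one_rpow]
    rw [div_eq_div_iff (by linarith [hdk k]) (hdk k).ne']
    ring
  have hFval : ∀ k, ∫ x in Ioi (1:ℝ), F k x
      = (-(c (k+1) * (-τ) ^ (k+1))) / (α*((k:ℝ)+1) - 2) := by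
    intro k
    simp only [hF]
    rw [integral_const_mul, hrpowint k]
    ring
  have hFnorm : ∀ k, ∫ x in Ioi (1:ℝ), ‖F k x‖ = (c (k+1) * τ ^ (k+1)) / (α*((k:ℝ)+1) - 2) := by
    intro k
    have heq : EqOn (fun x => ‖F k x‖)
        (fun x => (c (k+1) * τ ^ (k+1)) * x ^ ((1:ℝ) - α*((k:ℝ)+1))) (Ioi 1) := by
      intro x hx
      have hx0 : (0:ℝ) < x := lt_trans one_pos hx
      simp only [hF, Real.norm_eq_abs, abs_mul, abs_neg, abs_pow,
        abs_of_nonneg (Real.rpow_nonneg hx0.le _), abs_of_pos hτ0, abs_of_pos (hc_pos (k+1))]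
    rw [setIntegral_congr_fun measurableSet_Ioi heq, integral_const_mul, hrpowint k]
    ring
  have hFsum : Summable (fun k => ∫ x in Ioi (1:ℝ), ‖F k x‖) := by
    refine Summable.of_nonneg_of_le
      (fun k => integral_nonneg fun x => norm_nonneg _) (fun k => ?_)
      (((summable_nat_add_iff 1).2 S0).mul_left (1/(α-2)))
    · 
      rw [hFnorm k, div_eq_mul_inv, mul_comm]
      have hck : (0:ℝ) ≤ c (k+1) * τ ^ (k+1) := by positivity
      apply mul_le_mul_of_nonneg_right _ hck
      rw [one_div]
      apply inv_anti₀ hα2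
      have h := mul_nonneg hα0.le (Nat.cast_nonneg (α := ℝ) k)
      nlinarith
  -- pointwise expansion
  have hpt : ∀ x ∈ Ioi (1:ℝ), HasSum (fun k => F k x)
      (x * (1 - ((1 + τ * x ^ (-α)) ^ (M+1))⁻¹)) := by
    intro x hx
    have hx1 : (1:ℝ) < x := hx
    have hx0 : (0:ℝ) < x := by linarith
    set u : ℝ := τ * x ^ (-α) with hu
    have hu0 : 0 < u := mul_pos hτ0 (Real.rpow_pos_of_pos hx0 _)
    have hu1 : u < 1 := by
      have h1 : x ^ (-α) ≤ 1 := Real.rpow_le_one_of_one_le_of_nonpos hx1.le (by linarith)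
      have h2 : u ≤ τ := by
        rw [hu]
        exact mul_le_of_le_one_right hτ0.le h1
      linarith
    have hr : ‖-u‖ < 1 := by rw [norm_neg, Real.norm_eq_abs, abs_of_pos hu0]; exact hu1
    have h1' : HasSum (fun k : ℕ => -x * (c k * (-u)^k)) (-x * (((1+u)^(M+1))⁻¹)) := by
      have h1 := (hasSum_choose_mul_geometric_of_norm_lt_one (𝕜 := ℝ) M hr).mul_left (-x)
      simp only [sub_neg_eq_add, one_div] at h1
      simpa [hc] using h1
    have h2 : HasSum (fun k : ℕ => -x * (c (k+1) * (-u)^(k+1)))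
        (x * (1 - ((1+u)^(M+1))⁻¹)) := by
      have h3 := (hasSum_nat_add_iff' (f := fun k : ℕ => -x * (c k * (-u)^k)) 1).2 h1'
      have h0 : ∑ i ∈ Finset.range 1, -x * (c i * (-u)^i) = -x := by
        simp [hc]
      rw [h0] at h3
      convert h3 using 1
      exacts [rfl, by ring]
    have hFx : ∀ k : ℕ, F k x = -x * (c (k+1) * (-u)^(k+1)) := by
      intro k
      have e2 : (x ^ (-α))^(k+1) = x ^ (-α * ((k:ℝ)+1)) := by
        rw [← Real.rpow_natCast (x ^ (-α)) (k+1), ← Real.rpow_mul hx0.le]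
        congr 1
        push_cast
        ring
      have e1 : x * x ^ (-α * ((k:ℝ)+1)) = x ^ ((1:ℝ) - α*((k:ℝ)+1)) := by
        rw [show (1:ℝ) - α*((k:ℝ)+1) = 1 + (-α*((k:ℝ)+1)) by ring, Real.rpow_add hx0,
          Real.rpow_one]
      have e3 : (-u)^(k+1) = (-τ)^(k+1) * (x ^ (-α))^(k+1) := by
        rw [show -u = (-τ) * x ^ (-α) by rw [hu]; ring, mul_pow]
      simp only [hF, e3, e2]
      rw [← e1]
      ring
    exact h2.congr_fun hFx
  have key : (∫ x in Ioi (1:ℝ), x * (1 - ((1 + τ * x ^ (-α)) ^ (M+1))⁻¹))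
      = ∑' k : ℕ, ∫ x in Ioi (1:ℝ), F k x := by
    rw [integral_tsum_of_summable_integral_norm hFint hFsum]
    exact setIntegral_congr_fun measurableSet_Ioi fun x hx => ((hpt x hx).tsum_eq).symm
  refine ⟨hsummable, ?_⟩
  rw [key, ← tsum_mul_left, Summable.tsum_eq_zero_add hsummable]
  congr 1
  · simp
  · refine tsum_congr fun k => ?_
    rw [hFval k]
    simp only [hterm]
    have hcast : (((k+1 : ℕ)) : ℝ) = (k:ℝ)+1 := by push_cast; ring
    rw [hcast]
    have hden : b + ((k:ℝ)+1) ≠ 0 :=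
      ne_of_gt (by have := Nat.cast_nonneg (α := ℝ) k; linarith)
    have hbb : b / (b + ((k:ℝ)+1)) = -2 / (α*((k:ℝ)+1) - 2) := by
      rw [div_eq_div_iff hden (hdk k).ne', hb]
      field_simp
      ring
    rw [hbb]
    field_simp
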